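/- Let G be a finite graph-directed matrix product system in which every transition matrix T(e) has a strictly positive entry in every column (as holds for the transition graph of an IFS satisfying the finite neighbour condition). Fix n ∈ ℕ. Then there exist constants a, b > 0, depending only on n and the system, such that for every finite path γ of length at least n, writing γ = ηγ' where η is the prefix of length n, one has a·‖T(γ')‖ ≤ ‖T(γ)‖ ≤ b·‖T(γ')‖. -/

import Mathlib

open Filter Topology

/-- A graph-directed matrix product system: a finite directed graph (multiple
edges allowed) with a dimension for each vertex, a non-negative transition
matrix for each edge (encoded as a block of a big matrix indexed by
`(v : V) × Fin (dim v)`, supported on the `(src e, tgt e)` block), and a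
weight `W e ∈ (0,1)` for each edge. -/
structure GMPS where
  V : Type
  E : Type
  [fintV : Fintype V]
  [decV : DecidableEq V]
  [fintE : Fintype E]
  [decE : DecidableEq E]
  src : E → V
  tgt : E → V
  dim : V → ℕ
  dim_pos : ∀ v, 0 < dim v
  T : E → Matrix ((v : V) × Fin (dim v)) ((v : V) × Fin (dim v)) ℝ
  T_nonneg : ∀ e i j, 0 ≤ T e i j
  T_block : ∀ e i j, T e i j ≠ 0 → i.1 = src e ∧ j.1 = tgt e
  W : E → ℝ
  W_pos : ∀ e, 0 < W e
  W_lt_one : ∀ e, W e < 1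

attribute [instance] GMPS.fintV GMPS.decV GMPS.fintE GMPS.decE

namespace GMPS

variable (G : GMPS)

/-- The global index type for the block matrices. -/
abbrev Idx := (v : G.V) × Fin (G.dim v)

/-- A finite sequence of edges is a path when consecutive edges are compatible. -/
def IsPath (l : List G.E) : Prop := l.Chain' fun e e' => G.tgt e = G.src e'

/-- A (nonempty) path starts at the source of its first edge. -/
def startsAt (l : List G.E) (v : G.V) : Prop := ∃ e, l.head? = some e ∧ G.src e = v

/-- A (nonempty) path ends at the target of its last edge. -/
def endsAt (l : List G.E) (v : G.V) : Prop := ∃ e, l.getLast? = some e ∧ G.tgt e = v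

/-- `l` is a (nonempty) path from `v₁` to `v₂`. -/
def PathFrom (l : List G.E) (v₁ v₂ : G.V) : Prop :=
  G.IsPath l ∧ G.startsAt l v₁ ∧ G.endsAt l v₂

/-- The underlying graph is strongly connected. -/
def StronglyConnected : Prop := ∀ v₁ v₂ : G.V, ∃ l, G.PathFrom l v₁ v₂

/-- The product `T(e₁) ⋯ T(eₙ)` of the transition matrices along a path. -/
noncomputable def Tp (l : List G.E) : Matrix G.Idx G.Idx ℝ := (l.map G.T).prod

/-- The product `W(e₁) ⋯ W(eₙ)` of the weights along a path. -/
def Wp (l : List G.E) : ℝ := (l.map G.W).prod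

/-- The norm of a matrix: the sum of its entries. -/
noncomputable def mnorm (M : Matrix G.Idx G.Idx ℝ) : ℝ := ∑ i, ∑ j, M i j

/-- `Σ_t`: the paths `η` with `W(η) < t ≤ W(η⁻)` and `‖T(η)‖ > 0`. -/
def SigmaT (t : ℝ) : Set (List G.E) :=
  {l | G.IsPath l ∧ l ≠ [] ∧ G.Wp l < t ∧ t ≤ G.Wp l.dropLast ∧ 0 < G.mnorm (G.Tp l)}

/-- `H` is an irreducibility family: for all vertices `v₁, v₂` and all indices
`i ≤ d(v₁)`, `j ≤ d(v₂)` there is `γ ∈ H` from `v₁` to `v₂` with `T(γ)_{i,j} > 0`. -/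
def IrredFamily (H : Finset (List G.E)) : Prop :=
  ∀ (v₁ v₂ : G.V) (i : Fin (G.dim v₁)) (j : Fin (G.dim v₂)),
    ∃ γ ∈ H, G.PathFrom γ v₁ v₂ ∧ 0 < G.Tp γ ⟨v₁, i⟩ ⟨v₂, j⟩

/-- The matrix product system is irreducible. -/
def Irreducible : Prop := ∃ H : Finset (List G.E), G.IrredFamily H

/-- An infinite path in the graph. -/
def IsInfPath (γ : ℕ → G.E) : Prop := ∀ n, G.tgt (γ n) = G.src (γ (n + 1))

/-- The prefix `γ|n` of an infinite path. -/
def pfx (γ : ℕ → G.E) (n : ℕ) : List G.E := (List.range n).map γ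

/-- The quotient `log ‖T(γ|n)‖ / log W(γ|n)` whose `liminf`/`limsup`/limit are
the lower/upper Lyapunov exponent and Lyapunov exponent of `γ`. -/
noncomputable def lyapQ (γ : ℕ → G.E) (n : ℕ) : ℝ :=
  Real.log (G.mnorm (G.Tp (G.pfx γ n))) / Real.log (G.Wp (G.pfx γ n))

/-- `min_{η ∈ Σ_t} log ‖T(η)‖ / log t`. -/
noncomputable def minQ (t : ℝ) : ℝ :=
  sInf ((fun l => Real.log (G.mnorm (G.Tp l)) / Real.log t) '' G.SigmaT t)

/-- `max_{η ∈ Σ_t} log ‖T(η)‖ / log t`. -/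
noncomputable def maxQ (t : ℝ) : ℝ :=
  sSup ((fun l => Real.log (G.mnorm (G.Tp l)) / Real.log t) '' G.SigmaT t)

/-- The spectral radius of a (non-negative) square matrix. -/
noncomputable def spr (M : Matrix G.Idx G.Idx ℝ) : ℝ := (spectralRadius ℝ M).toReal

end GMPS

namespace GMPS
variable (G : GMPS)

lemma Tp_nil : G.Tp [] = 1 := by simp [GMPS.Tp]

lemma Tp_cons (e : G.E) (l : List G.E) : G.Tp (e :: l) = G.T e * G.Tp l := by
  simp [GMPS.Tp]

lemma Tp_concat (l : List G.E) (e : G.E) : G.Tp (l ++ [e]) = G.Tp l * G.T e := by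
  simp [GMPS.Tp]

lemma Tp_append (l₁ l₂ : List G.E) : G.Tp (l₁ ++ l₂) = G.Tp l₁ * G.Tp l₂ := by
  simp [GMPS.Tp]

lemma Tp_entry_nonneg : ∀ (l : List G.E) (i j : G.Idx), 0 ≤ G.Tp l i j := by
  intro l
  induction l with
  | nil => intro i j; rw [Tp_nil]; by_cases h : i = j <;> simp [Matrix.one_apply, h]
  | cons e l ih =>
    intro i j
    rw [Tp_cons, Matrix.mul_apply]
    exact Finset.sum_nonneg fun k _ => mul_nonneg (G.T_nonneg e i k) (ih k j)

lemma mnorm_nonneg_of (M : Matrix G.Idx G.Idx ℝ) (h : ∀ i j, 0 ≤ M i j) :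
    0 ≤ G.mnorm M :=
  Finset.sum_nonneg fun i _ => Finset.sum_nonneg fun j _ => h i j

lemma mnorm_Tp_nonneg (l : List G.E) : 0 ≤ G.mnorm (G.Tp l) :=
  G.mnorm_nonneg_of _ (G.Tp_entry_nonneg l)

lemma mnorm_mul (A B : Matrix G.Idx G.Idx ℝ) :
    G.mnorm (A * B) = ∑ j, (∑ i, A i j) * (∑ k, B j k) := by
  simp only [GMPS.mnorm, Matrix.mul_apply, Finset.sum_mul, Finset.mul_sum]
  have : ∀ i : G.Idx, ∑ k : G.Idx, ∑ j : G.Idx, A i j * B j k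
      = ∑ j : G.Idx, ∑ k : G.Idx, A i j * B j k := fun i => Finset.sum_comm
  simp only [this]
  rw [Finset.sum_comm]
  exact Finset.sum_congr rfl fun j _ => Finset.sum_comm

lemma mnorm_mul_le (A B : Matrix G.Idx G.Idx ℝ)
    (hA : ∀ i j, 0 ≤ A i j) (hB : ∀ i j, 0 ≤ B i j) :
    G.mnorm (A * B) ≤ G.mnorm A * G.mnorm B := by
  rw [mnorm_mul]
  have h1 : ∀ j : G.Idx, (∑ i, A i j) * (∑ k, B j k) ≤ (∑ i, A i j) * G.mnorm B := by
    intro j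
    refine mul_le_mul_of_nonneg_left ?_ (Finset.sum_nonneg fun i _ => hA i j)
    exact Finset.single_le_sum (f := fun j' => ∑ k, B j' k)
      (fun j' _ => Finset.sum_nonneg fun k _ => hB j' k) (Finset.mem_univ j)
  calc ∑ j, (∑ i, A i j) * (∑ k, B j k) ≤ ∑ j, (∑ i, A i j) * G.mnorm B :=
        Finset.sum_le_sum fun j _ => h1 j
    _ = G.mnorm A * G.mnorm B := by
        rw [← Finset.sum_mul]
        congr 1
        exact Finset.sum_comm

lemma mnorm_one : G.mnorm 1 = (Fintype.card G.Idx : ℝ) := by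
  simp [GMPS.mnorm, Matrix.one_apply]

end GMPS

/-- If every transition matrix has a strictly positive entry in every column
(of its block), then deleting a fixed number `n` of initial edges of a path
changes the norm of the transition matrix product only up to constants
depending on `n`. -/
theorem gmps_drop_prefix_norm_comparable (G : GMPS)
    (hcol : ∀ (e : G.E) (j : Fin (G.dim (G.tgt e))),
      ∃ i : Fin (G.dim (G.src e)), 0 < G.T e ⟨G.src e, i⟩ ⟨G.tgt e, j⟩)
    (n : ℕ) :
    ∃ a b : ℝ, 0 < a ∧ 0 < b ∧
      ∀ η γ' : List G.E, G.IsPath (η ++ γ') → η.length = n →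
        a * G.mnorm (G.Tp γ') ≤ G.mnorm (G.Tp (η ++ γ')) ∧
        G.mnorm (G.Tp (η ++ γ')) ≤ b * G.mnorm (G.Tp γ') := by
  classical
  set D : ℝ := (Fintype.card G.Idx : ℝ) with hD
  have hD0 : (0:ℝ) ≤ D := Nat.cast_nonneg _
  have hfin : ∀ e : G.E, (Finset.univ : Finset (Fin (G.dim (G.tgt e)))).Nonempty :=
    fun e => ⟨⟨0, G.dim_pos _⟩, Finset.mem_univ _⟩
  set δ : G.E → ℝ := fun e =>
    Finset.univ.inf' (hfin e)
      (fun j => G.T e ⟨G.src e, (hcol e j).choose⟩ ⟨G.tgt e, j⟩) with hδ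
  have hδpos : ∀ e, 0 < δ e := by
    intro e
    rw [hδ]
    rw [Finset.lt_inf'_iff]
    intro j _
    exact (hcol e j).choose_spec
  have hδle : ∀ (e : G.E) (j : Fin (G.dim (G.tgt e))),
      δ e ≤ G.T e ⟨G.src e, (hcol e j).choose⟩ ⟨G.tgt e, j⟩ :=
    fun e j => Finset.inf'_le _ (Finset.mem_univ j)
  set ε : ℝ := (insert (1:ℝ) (Finset.image δ Finset.univ)).min'
      (Finset.insert_nonempty _ _) with hεdef
  have hε1 : ε ≤ 1 := Finset.min'_le _ _ (Finset.mem_insert_self _ _)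
  have hεδ : ∀ e, ε ≤ δ e := fun e =>
    Finset.min'_le _ _ (Finset.mem_insert_of_mem
      (Finset.mem_image_of_mem δ (Finset.mem_univ e)))
  have hε0 : 0 < ε := by
    rw [hεdef, Finset.lt_min'_iff]
    intro y hy
    rcases Finset.mem_insert.mp hy with h | h
    · rw [h]; norm_num
    · obtain ⟨e, -, rfl⟩ := Finset.mem_image.mp h
      exact hδpos e
  set Bc : ℝ := (insert (1:ℝ) (Finset.image (fun e => G.mnorm (G.T e)) Finset.univ)).max'
      (Finset.insert_nonempty _ _) with hBdef
  have hB1 : (1:ℝ) ≤ Bc := Finset.le_max' _ _ (Finset.mem_insert_self _ _)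
  have hB0 : (0:ℝ) < Bc := lt_of_lt_of_le one_pos hB1
  have hBe : ∀ e, G.mnorm (G.T e) ≤ Bc := fun e =>
    Finset.le_max' _ _ (Finset.mem_insert_of_mem
      (Finset.mem_image_of_mem (fun e => G.mnorm (G.T e)) (Finset.mem_univ e)))
  have hεn0 : 0 < ε ^ n := pow_pos hε0 n
  have hεn1 : ε ^ n ≤ 1 := pow_le_one₀ hε0.le hε1
  refine ⟨ε ^ n / (D + 1), (D + 1) * Bc ^ n, by positivity, by positivity, ?_⟩
  -- the key column-sum lower bound
  have key : ∀ l : List G.E, G.IsPath l → ∀ v : G.V,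
      (l = [] ∨ ∃ e, l.getLast? = some e ∧ G.tgt e = v) →
      ∀ j : Fin (G.dim v), ε ^ l.length ≤ ∑ i, G.Tp l i ⟨v, j⟩ := by
    intro l
    induction l using List.reverseRecOn with
    | nil =>
      intro _ v _ j
      rw [G.Tp_nil]
      simp [Matrix.one_apply]
    | append_singleton l e ih =>
      intro hp v hv j
      rcases hv with h | ⟨e', he', hv⟩
      · exact absurd h (by simp)
      rw [List.getLast?_concat] at he'
      obtain rfl : e = e' := Option.some.inj he'
      subst hv
      have hp' : List.Chain' (fun a b => G.tgt a = G.src b) (l ++ [e]) := hp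
      obtain ⟨hl, -, hcomp⟩ := List.isChain_append.mp hp'
      have hdisj : l = [] ∨ ∃ g, l.getLast? = some g ∧ G.tgt g = G.src e := by
        cases hL : l.getLast? with
        | none => exact Or.inl (by simpa using hL)
        | some g =>
          exact Or.inr ⟨g, rfl, hcomp g (Option.mem_def.mpr hL) e (Option.mem_def.mpr rfl)⟩
      obtain i₀spec := hδle e j
      have hcs : ε ^ l.length ≤ ∑ i, G.Tp l i ⟨G.src e, (hcol e j).choose⟩ :=
        ih hl (G.src e) hdisj _
      have h1 : ε ^ (l ++ [e]).length ≤
          (∑ i, G.Tp l i ⟨G.src e, (hcol e j).choose⟩) *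
            G.T e ⟨G.src e, (hcol e j).choose⟩ ⟨G.tgt e, j⟩ := by
        have : (l ++ [e]).length = l.length + 1 := by simp
        rw [this, pow_succ]
        exact mul_le_mul hcs (le_trans (hεδ e) i₀spec) hε0.le
          (le_trans (pow_nonneg hε0.le _) hcs)
      refine le_trans h1 ?_
      have h2 : (∑ i, G.Tp l i ⟨G.src e, (hcol e j).choose⟩) *
            G.T e ⟨G.src e, (hcol e j).choose⟩ ⟨G.tgt e, j⟩ ≤
          ∑ k, (∑ i, G.Tp l i k) * G.T e k ⟨G.tgt e, j⟩ :=
        Finset.single_le_sum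
          (f := fun k => (∑ i, G.Tp l i k) * G.T e k ⟨G.tgt e, j⟩)
          (fun k _ => mul_nonneg
            (Finset.sum_nonneg fun i _ => G.Tp_entry_nonneg l i k)
            (G.T_nonneg e k _))
          (Finset.mem_univ _)
      refine le_trans h2 (le_of_eq ?_)
      rw [G.Tp_concat]
      calc ∑ k, (∑ i, G.Tp l i k) * G.T e k ⟨G.tgt e, j⟩
          = ∑ k, ∑ i, G.Tp l i k * G.T e k ⟨G.tgt e, j⟩ := by
            simp [Finset.sum_mul]
        _ = ∑ i, ∑ k, G.Tp l i k * G.T e k ⟨G.tgt e, j⟩ := Finset.sum_comm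
        _ = ∑ i, (G.Tp l * G.T e) i ⟨G.tgt e, j⟩ := by
            simp [Matrix.mul_apply]
  -- upper bound for products
  have upper_len : ∀ l : List G.E, G.mnorm (G.Tp l) ≤ D * Bc ^ l.length := by
    intro l
    induction l with
    | nil => rw [G.Tp_nil, G.mnorm_one]; simp [hD]
    | cons e l ih =>
      rw [G.Tp_cons]
      calc G.mnorm (G.T e * G.Tp l) ≤ G.mnorm (G.T e) * G.mnorm (G.Tp l) :=
            G.mnorm_mul_le _ _ (G.T_nonneg e) (G.Tp_entry_nonneg l)
        _ ≤ Bc * (D * Bc ^ l.length) :=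
            mul_le_mul (hBe e) ih (G.mnorm_Tp_nonneg l) hB0.le
        _ = D * Bc ^ (e :: l).length := by rw [List.length_cons]; ring
  intro η γ' hpath hlen
  have hγ'0 : 0 ≤ G.mnorm (G.Tp γ') := G.mnorm_Tp_nonneg γ'
  constructor
  · -- lower bound
    cases η with
    | nil =>
      simp only [List.nil_append]
      have ha1 : ε ^ n / (D + 1) ≤ 1 := by
        rw [div_le_one (by linarith)]
        linarith
      nlinarith [mul_nonneg (sub_nonneg.mpr ha1) hγ'0]
    | cons e0 rest =>
      have hηne : (e0 :: rest : List G.E) ≠ [] := by simp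
      have hpath' : List.Chain' (fun a b => G.tgt a = G.src b) ((e0 :: rest) ++ γ') := hpath
      obtain ⟨hη, hγ, hcomp⟩ := List.isChain_append.mp hpath'
      have hg : (e0 :: rest).getLast? = some ((e0 :: rest).getLast hηne) :=
        List.getLast?_eq_getLast hηne
      have hcsum : ∀ j : Fin (G.dim (G.tgt ((e0 :: rest).getLast hηne))),
          ε ^ n ≤ ∑ i, G.Tp (e0 :: rest) i ⟨G.tgt ((e0 :: rest).getLast hηne), j⟩ := by
        intro j
        have := key (e0 :: rest) hη _ (Or.inr ⟨_, hg, rfl⟩) j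
        rwa [hlen] at this
      rw [G.Tp_append, G.mnorm_mul]
      cases γ' with
      | nil =>
        rw [G.Tp_nil, G.mnorm_one]
        have hone : ∀ x : G.Idx, (∑ k, (1 : Matrix G.Idx G.Idx ℝ) x k) = 1 := by
          intro x; simp [Matrix.one_apply]
        have hx0 : ∀ x : G.Idx, 0 ≤ ∑ i, G.Tp (e0 :: rest) i x :=
          fun x => Finset.sum_nonneg fun i _ => G.Tp_entry_nonneg _ i x
        have hlb : ε ^ n ≤ ∑ x : G.Idx, (∑ i, G.Tp (e0 :: rest) i x) *
            (∑ k, (1 : Matrix G.Idx G.Idx ℝ) x k) := by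
          have hsing := Finset.single_le_sum
            (f := fun x : G.Idx => (∑ i, G.Tp (e0 :: rest) i x) *
              (∑ k, (1 : Matrix G.Idx G.Idx ℝ) x k))
            (fun x _ => mul_nonneg (hx0 x) (by rw [hone x]; norm_num))
            (Finset.mem_univ (⟨G.tgt ((e0 :: rest).getLast hηne),
              ⟨0, G.dim_pos _⟩⟩ : G.Idx))
          refine le_trans ?_ hsing
          rw [hone, mul_one]
          exact hcsum ⟨0, G.dim_pos _⟩
        have hDle : ε ^ n / (D + 1) * D ≤ ε ^ n := by
          rw [div_mul_eq_mul_div, div_le_iff₀ (by linarith)]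
          nlinarith
        exact le_trans hDle hlb
      | cons e' rest' =>
        have hv : G.tgt ((e0 :: rest).getLast hηne) = G.src e' :=
          hcomp _ (Option.mem_def.mpr hg) e' (Option.mem_def.mpr rfl)
        have hrs0 : ∀ x : G.Idx, x.1 ≠ G.src e' →
            (∑ k, G.Tp (e' :: rest') x k) = 0 := by
          intro x hx
          refine Finset.sum_eq_zero fun k _ => ?_
          rw [G.Tp_cons, Matrix.mul_apply]
          refine Finset.sum_eq_zero fun j' _ => ?_
          have hT : G.T e' x j' = 0 := by
            by_contra h
            exact hx (G.T_block e' x j' h).1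
          rw [hT, zero_mul]
        have hpt : ∀ x : G.Idx,
            ε ^ n * (∑ k, G.Tp (e' :: rest') x k) ≤
            (∑ i, G.Tp (e0 :: rest) i x) * (∑ k, G.Tp (e' :: rest') x k) := by
          intro x
          by_cases hx : x.1 = G.src e'
          · obtain ⟨w, jx⟩ := x
            have hw : w = G.tgt ((e0 :: rest).getLast hηne) := by
              rw [hv]; exact hx
            subst hw
            exact mul_le_mul_of_nonneg_right (hcsum jx)
              (Finset.sum_nonneg fun k _ => G.Tp_entry_nonneg _ _ k)
          · rw [hrs0 x hx]; simp
        calc ε ^ n / (D + 1) * G.mnorm (G.Tp (e' :: rest'))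
            ≤ ε ^ n * G.mnorm (G.Tp (e' :: rest')) := by
              apply mul_le_mul_of_nonneg_right _ (G.mnorm_Tp_nonneg _)
              rw [div_le_iff₀ (by linarith)]
              nlinarith
          _ = ∑ x : G.Idx, ε ^ n * (∑ k, G.Tp (e' :: rest') x k) := by
              rw [GMPS.mnorm, Finset.mul_sum]
          _ ≤ ∑ x : G.Idx, (∑ i, G.Tp (e0 :: rest) i x) *
                (∑ k, G.Tp (e' :: rest') x k) :=
              Finset.sum_le_sum fun x _ => hpt x
  · -- upper bound
    rw [G.Tp_append]
    calc G.mnorm (G.Tp η * G.Tp γ')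
        ≤ G.mnorm (G.Tp η) * G.mnorm (G.Tp γ') :=
          G.mnorm_mul_le _ _ (G.Tp_entry_nonneg η) (G.Tp_entry_nonneg γ')
      _ ≤ (D * Bc ^ n) * G.mnorm (G.Tp γ') := by
          refine mul_le_mul_of_nonneg_right ?_ hγ'0
          have := upper_len η
          rwa [hlen] at this
      _ ≤ (D + 1) * Bc ^ n * G.mnorm (G.Tp γ') := by
          refine mul_le_mul_of_nonneg_right ?_ hγ'0
          nlinarith [pow_pos hB0 n]
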